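/- Let μ be uniform on {−1,1}ⁿ and μ_N the empirical measure of N = ⌈n^α⌉ i.i.d. uniform samples, α ≥ 2. Then for all sufficiently large n, E[W(μ_N, μ)] ≥ n/2 − √(((α+1)/2)·n·log n). -/

import Mathlib

open MeasureTheory ProbabilityTheory

/-- The Boolean cube `{-1,1}^n`, encoded as `Fin n → Bool`. -/
abbrev Cube (n : ℕ) := Fin n → Bool

/-- Hamming distance, as a real number. -/
noncomputable def hdist {n : ℕ} (x y : Cube n) : ℝ := (hammingDist x y : ℝ)

/-- A probability mass function on the cube. -/
def IsProb {n : ℕ} (p : Cube n → ℝ) : Prop := (∀ x, 0 ≤ p x) ∧ ∑ x, p x = 1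

/-- A coupling of two mass functions on the cube. -/
def IsCoupling {n : ℕ} (γ : Cube n × Cube n → ℝ) (p q : Cube n → ℝ) : Prop :=
  (∀ z, 0 ≤ γ z) ∧ (∀ x, ∑ y, γ (x, y) = p x) ∧ (∀ y, ∑ x, γ (x, y) = q y)

/-- Wasserstein-1 distance on the cube w.r.t. the Hamming metric. -/
noncomputable def W {n : ℕ} (p q : Cube n → ℝ) : ℝ :=
  sInf {c | ∃ γ, IsCoupling γ p q ∧ c = ∑ z : Cube n × Cube n, γ z * hdist z.1 z.2}

/-- The uniform mass function on the cube. -/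
noncomputable def unif (n : ℕ) : Cube n → ℝ := fun _ => 1 / 2 ^ n

/-- The empirical mass function of the sample `X`. -/
noncomputable def empirical {n N : ℕ} (X : Fin N → Cube n) : Cube n → ℝ :=
  fun x => ((Finset.univ.filter fun i => X i = x).card : ℝ) / N

/-- `X 0, …, X (N-1)` are i.i.d. uniform random points of the cube. -/
def IIDUniform {Ω : Type*} [MeasurableSpace Ω] (P : Measure Ω) {n N : ℕ}
    (X : Fin N → Ω → Cube n) : Prop :=
  (∀ i, Measurable (X i)) ∧ iIndepFun X P ∧
    ∀ i x, P {ω | X i ω = x} = 1 / 2 ^ n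

/-- The Fourier character `χ_S(x) = ∏_{i ∈ S} x i`. -/
def chi {n : ℕ} (S : Finset (Fin n)) (x : Cube n) : ℝ := ∏ i ∈ S, if x i then 1 else -1

/-- Fourier coefficient `f̂(S)`. -/
noncomputable def fhat {n : ℕ} (f : Cube n → ℝ) (S : Finset (Fin n)) : ℝ :=
  (∑ x, f x * chi S x) / 2 ^ n

/-- ε-diffusion of a function/measure on the cube. -/
noncomputable def diffuse {n : ℕ} (ε : ℝ) (f : Cube n → ℝ) : Cube n → ℝ :=
  fun x => ∑ x', (1 - ε) ^ (n - hammingDist x x') * ε ^ (hammingDist x x') * f x'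

section AuxLemmas
open Finset Real

lemma ball_card_chernoff {n : ℕ} (s : Cube n) (m : ℕ) (l : ℝ) (hl : 0 ≤ l) :
    ((Finset.univ.filter fun y : Cube n => hammingDist s y ≤ m).card : ℝ) ≤
      Real.exp (l * m) * (1 + Real.exp (-l)) ^ n := by
  have h1 : ((Finset.univ.filter fun y : Cube n => hammingDist s y ≤ m).card : ℝ)
      ≤ ∑ y : Cube n, Real.exp (l * (m - hammingDist s y)) := by
    rw [Finset.card_eq_sum_ones, Nat.cast_sum]
    rw [← Finset.sum_filter_add_sum_filter_not Finset.univ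
      (fun y : Cube n => hammingDist s y ≤ m) (fun y => Real.exp (l * (m - hammingDist s y)))]
    have h2 : ∀ y ∈ Finset.univ.filter fun y : Cube n => hammingDist s y ≤ m,
        ((1:ℕ) : ℝ) ≤ Real.exp (l * (m - hammingDist s y)) := by
      intro y hy
      rw [Finset.mem_filter] at hy
      have hc : ((hammingDist s y : ℝ)) ≤ (m : ℝ) := Nat.cast_le.mpr hy.2
      have : (0:ℝ) ≤ l * (m - hammingDist s y) := mul_nonneg hl (by linarith)
      calc ((1:ℕ):ℝ) = Real.exp 0 := by simp
        _ ≤ _ := Real.exp_le_exp.mpr this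
    calc (∑ _y ∈ Finset.univ.filter fun y : Cube n => hammingDist s y ≤ m, ((1:ℕ):ℝ))
        ≤ ∑ y ∈ Finset.univ.filter fun y : Cube n => hammingDist s y ≤ m,
            Real.exp (l * (m - hammingDist s y)) := Finset.sum_le_sum h2
      _ ≤ _ := le_add_of_nonneg_right (Finset.sum_nonneg fun _ _ => (Real.exp_pos _).le)
  refine h1.trans ?_
  set g : Fin n → Bool → ℝ := fun i b => if s i ≠ b then Real.exp (-l) else 1 with hg
  have h3 : ∀ y : Cube n, Real.exp (l * ((m:ℝ) - hammingDist s y))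
      = Real.exp (l * m) * ∏ i : Fin n, g i (y i) := by
    intro y
    have hd : Real.exp (-l * (hammingDist s y : ℝ))
        = ∏ i : Fin n, g i (y i) := by
      simp only [hg]
      rw [← Finset.prod_filter]
      rw [Finset.prod_const]
      rw [hammingDist]
      rw [← Real.exp_nat_mul]
      ring_nf
    rw [mul_sub, Real.exp_sub, div_eq_mul_inv, ← Real.exp_neg, ← hd]
    ring_nf
  rw [funext h3] at *
  rw [← Finset.mul_sum]
  have h4 : ∑ y : Cube n, ∏ i : Fin n, g i (y i)
      = (1 + Real.exp (-l)) ^ n := by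
    rw [← Fintype.piFinset_univ, Finset.sum_prod_piFinset univ g]
    have : ∀ i : Fin n, (∑ b : Bool, g i b) = 1 + Real.exp (-l) := by
      intro i; cases h : s i <;> simp [hg, h, add_comm]
    rw [Finset.prod_congr rfl fun i _ => this i, Finset.prod_const, Finset.card_univ,
      Fintype.card_fin]
  rw [h4]

lemma ball_card_le {n : ℕ} (hn : n ≠ 0) (s : Cube n) (m : ℕ) (t : ℝ) (ht : 0 ≤ t)
    (hm : (m : ℝ) = n / 2 - t) :
    ((Finset.univ.filter fun y : Cube n => hammingDist s y ≤ m).card : ℝ) ≤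
      2 ^ n * Real.exp (-2 * t ^ 2 / n) := by
  have hn' : (0:ℝ) < n := by exact_mod_cast Nat.pos_of_ne_zero hn
  set l : ℝ := 4 * t / n with hldef
  have hl : 0 ≤ l := by positivity
  refine (ball_card_chernoff s m l hl).trans ?_
  have h1 : 1 + Real.exp (-l) ≤ 2 * Real.exp (-(l/2) + (l/2)^2/2) := by
    have he : 1 + Real.exp (-l) = 2 * Real.exp (-(l/2)) * Real.cosh (l/2) := by
      have e1 : Real.exp (l/2) * Real.exp (-(l/2)) = 1 := by rw [← Real.exp_add]; simp
      have e2 : Real.exp (-(l/2)) * Real.exp (-(l/2)) = Real.exp (-l) := by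
        rw [← Real.exp_add]; ring_nf
      rw [Real.cosh_eq]
      linear_combination -e1 - e2
    rw [he, Real.exp_add]
    have := Real.cosh_le_exp_half_sq (l/2)
    calc 2 * Real.exp (-(l/2)) * Real.cosh (l/2)
        ≤ 2 * Real.exp (-(l/2)) * Real.exp ((l/2)^2/2) := by
          apply mul_le_mul_of_nonneg_left this (by positivity)
      _ = 2 * (Real.exp (-(l/2)) * Real.exp ((l/2)^2/2)) := by ring
  have h2 : (1 + Real.exp (-l)) ^ n ≤ 2 ^ n * Real.exp (n * (-(l/2) + (l/2)^2/2)) := by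
    calc (1 + Real.exp (-l)) ^ n ≤ (2 * Real.exp (-(l/2) + (l/2)^2/2)) ^ n :=
          pow_le_pow_left₀ (by positivity) h1 n
      _ = 2 ^ n * Real.exp (n * (-(l/2) + (l/2)^2/2)) := by
          rw [mul_pow, ← Real.exp_nat_mul]
  calc Real.exp (l * m) * (1 + Real.exp (-l)) ^ n
      ≤ Real.exp (l * m) * (2 ^ n * Real.exp (n * (-(l/2) + (l/2)^2/2))) := by
        apply mul_le_mul_of_nonneg_left h2 (Real.exp_pos _).le
    _ = 2 ^ n * Real.exp (l * m + n * (-(l/2) + (l/2)^2/2)) := by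
        rw [Real.exp_add]; ring
    _ = 2 ^ n * Real.exp (-2 * t ^ 2 / n) := by
        congr 1
        rw [hm, hldef]
        field_simp
        ring

lemma card_cube (n : ℕ) : Fintype.card (Cube n) = 2 ^ n := by
  simp [Fintype.card_fun]

lemma unif_isProb (n : ℕ) : IsProb (unif n) := by
  constructor
  · intro x; unfold unif; positivity
  · simp [unif, Finset.card_univ, card_cube]

lemma empirical_isProb {n N : ℕ} (hN : N ≠ 0) (X : Fin N → Cube n) :
    IsProb (empirical X) := by
  constructor
  · intro x; unfold empirical; positivity
  · have h := Finset.card_eq_sum_card_fiberwise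
      (f := X) (s := Finset.univ) (t := Finset.univ) (fun i _ => Finset.mem_univ _)
    have h2 : ∑ x : Cube n, ((Finset.univ.filter fun i => X i = x).card : ℝ) = N := by
      rw [← Nat.cast_sum, ← h]
      simp
    simp only [empirical, div_eq_mul_inv, ← Finset.sum_mul]
    rw [h2]
    field_simp

lemma prod_coupling {n : ℕ} {p q : Cube n → ℝ} (hp : IsProb p) (hq : IsProb q) :
    IsCoupling (fun z : Cube n × Cube n => p z.1 * q z.2) p q := by
  refine ⟨fun z => mul_nonneg (hp.1 _) (hq.1 _), fun x => ?_, fun y => ?_⟩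
  · dsimp only; rw [← Finset.mul_sum, hq.2, mul_one]
  · dsimp only; rw [← Finset.sum_mul, hp.2, one_mul]

lemma hdist_nonneg {n : ℕ} (x y : Cube n) : 0 ≤ hdist x y := by
  unfold hdist; positivity

lemma hdist_le {n : ℕ} (x y : Cube n) : hdist x y ≤ n := by
  unfold hdist
  exact_mod_cast (hammingDist_le_card_fintype).trans_eq (Fintype.card_fin n)

lemma W_set_nonempty {n : ℕ} {p q : Cube n → ℝ} (hp : IsProb p) (hq : IsProb q) :
    {c | ∃ γ, IsCoupling γ p q ∧ c = ∑ z : Cube n × Cube n, γ z * hdist z.1 z.2}.Nonempty :=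
  ⟨_, _, prod_coupling hp hq, rfl⟩

lemma W_bddBelow {n : ℕ} (p q : Cube n → ℝ) :
    BddBelow {c | ∃ γ, IsCoupling γ p q ∧ c = ∑ z : Cube n × Cube n, γ z * hdist z.1 z.2} := by
  refine ⟨0, ?_⟩
  rintro c ⟨γ, hγ, rfl⟩
  exact Finset.sum_nonneg fun z _ => mul_nonneg (hγ.1 z) (hdist_nonneg _ _)

lemma W_nonneg {n : ℕ} (p q : Cube n → ℝ) : 0 ≤ W p q := by
  apply Real.sInf_nonneg
  rintro c ⟨γ, hγ, rfl⟩
  exact Finset.sum_nonneg fun z _ => mul_nonneg (hγ.1 z) (hdist_nonneg _ _)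

lemma W_le {n : ℕ} {p q : Cube n → ℝ} (hp : IsProb p) (hq : IsProb q) : W p q ≤ n := by
  have hmem : (∑ z : Cube n × Cube n, (p z.1 * q z.2) * hdist z.1 z.2) ∈
      {c | ∃ γ, IsCoupling γ p q ∧ c = ∑ z : Cube n × Cube n, γ z * hdist z.1 z.2} :=
    ⟨_, prod_coupling hp hq, rfl⟩
  refine (csInf_le (W_bddBelow p q) hmem).trans ?_
  calc ∑ z : Cube n × Cube n, (p z.1 * q z.2) * hdist z.1 z.2
      ≤ ∑ z : Cube n × Cube n, (p z.1 * q z.2) * n := by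
        apply Finset.sum_le_sum
        intro z _
        exact mul_le_mul_of_nonneg_left (hdist_le _ _) (mul_nonneg (hp.1 _) (hq.1 _))
    _ = n := by
        rw [← Finset.sum_mul, Fintype.sum_prod_type]
        simp only [← Finset.mul_sum, hq.2, mul_one]
        rw [hp.2, one_mul]

lemma W_ge_of_small_support {n : ℕ} (p : Cube n → ℝ) (hp : IsProb p) (S : Finset (Cube n))
    (hS : ∀ x, p x ≠ 0 → x ∈ S) (m : ℕ) (B : ℝ)
    (hB : ∀ s : Cube n,
      ((Finset.univ.filter fun y : Cube n => hammingDist s y ≤ m).card : ℝ) ≤ B) :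
    ((m : ℝ) + 1) * (1 - S.card * B / 2 ^ n) ≤ W p (unif n) := by
  classical
  apply le_csInf (W_set_nonempty hp (unif_isProb n))
  rintro c ⟨γ, ⟨hγ0, hγ1, hγ2⟩, rfl⟩
  set Bad : Finset (Cube n) :=
    Finset.univ.filter (fun y => ∃ s ∈ S, hammingDist s y ≤ m) with hBadDef
  have hBadcard : (Bad.card : ℝ) ≤ S.card * B := by
    have hsub : Bad ⊆ S.biUnion
        (fun s => Finset.univ.filter fun y : Cube n => hammingDist s y ≤ m) := by
      intro y hy
      rw [hBadDef, Finset.mem_filter] at hy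
      obtain ⟨s, hs, hd⟩ := hy.2
      exact Finset.mem_biUnion.mpr ⟨s, hs, Finset.mem_filter.mpr ⟨Finset.mem_univ _, hd⟩⟩
    calc (Bad.card : ℝ)
        ≤ ((S.biUnion fun s =>
            Finset.univ.filter fun y : Cube n => hammingDist s y ≤ m).card : ℝ) := by
          exact_mod_cast Finset.card_le_card hsub
      _ ≤ ∑ s ∈ S, ((Finset.univ.filter fun y : Cube n => hammingDist s y ≤ m).card : ℝ) := by
          exact_mod_cast Finset.card_biUnion_le
      _ ≤ ∑ _s ∈ S, B := Finset.sum_le_sum fun s _ => hB s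
      _ = S.card * B := by rw [Finset.sum_const, nsmul_eq_mul]
  have hBadle : Bad.card ≤ 2 ^ n := by
    calc Bad.card ≤ Fintype.card (Cube n) := Finset.card_le_univ Bad
      _ = 2 ^ n := card_cube n
  have hcompl : ((Badᶜ).card : ℝ) = 2 ^ n - Bad.card := by
    rw [Finset.card_compl, card_cube, Nat.cast_sub hBadle]
    push_cast; ring
  have h2n : (0 : ℝ) < 2 ^ n := by positivity
  have key : ∀ y ∈ Badᶜ, ((m : ℝ) + 1) * unif n y ≤ ∑ x : Cube n, γ (x, y) * hdist x y := by
    intro y hy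
    rw [Finset.mem_compl] at hy
    have h1 : ∀ x : Cube n, ((m : ℝ) + 1) * γ (x, y) ≤ γ (x, y) * hdist x y := by
      intro x
      rcases eq_or_lt_of_le (hγ0 (x, y)) with h | h
      · rw [← h]; simp
      · have hpx : p x ≠ 0 := by
          intro h0
          have hle : γ (x, y) ≤ ∑ y', γ (x, y') :=
            Finset.single_le_sum (fun y' _ => hγ0 _) (Finset.mem_univ y)
          rw [hγ1, h0] at hle
          linarith
        have hx : x ∈ S := hS x hpx
        have hnle : ¬ hammingDist x y ≤ m := by
          intro hle
          exact hy (Finset.mem_filter.mpr ⟨Finset.mem_univ _, ⟨x, hx, hle⟩⟩)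
        have hmd : (m : ℝ) + 1 ≤ hdist x y := by
          unfold hdist
          exact_mod_cast Nat.succ_le_of_lt (not_le.mp hnle)
        calc ((m : ℝ) + 1) * γ (x, y) ≤ hdist x y * γ (x, y) :=
              mul_le_mul_of_nonneg_right hmd h.le
          _ = γ (x, y) * hdist x y := mul_comm _ _
    calc ((m : ℝ) + 1) * unif n y = ∑ x : Cube n, ((m : ℝ) + 1) * γ (x, y) := by
          rw [← Finset.mul_sum, hγ2]
      _ ≤ ∑ x : Cube n, γ (x, y) * hdist x y := Finset.sum_le_sum fun x _ => h1 x
  calc ((m : ℝ) + 1) * (1 - S.card * B / 2 ^ n)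
      ≤ ((m : ℝ) + 1) * ((Badᶜ.card : ℝ) / 2 ^ n) := by
        apply mul_le_mul_of_nonneg_left _ (by positivity)
        rw [hcompl, sub_div, div_self h2n.ne']
        have : (Bad.card : ℝ) / 2 ^ n ≤ S.card * B / 2 ^ n := by gcongr
        linarith
    _ = ∑ y ∈ Badᶜ, ((m : ℝ) + 1) * unif n y := by
        simp only [unif, Finset.sum_const, nsmul_eq_mul]
        ring
    _ ≤ ∑ y ∈ Badᶜ, ∑ x : Cube n, γ (x, y) * hdist x y := Finset.sum_le_sum key
    _ ≤ ∑ y : Cube n, ∑ x : Cube n, γ (x, y) * hdist x y := by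
        apply Finset.sum_le_sum_of_subset_of_nonneg (Finset.subset_univ _)
        intro y _ _
        exact Finset.sum_nonneg fun x _ => mul_nonneg (hγ0 _) (hdist_nonneg _ _)
    _ = ∑ z : Cube n × Cube n, γ z * hdist z.1 z.2 := by
        rw [Fintype.sum_prod_type_right]

lemma N_ne_zero {n : ℕ} (hn : 1 ≤ n) (α : ℝ) (hα0 : 0 ≤ α) : ⌈(n : ℝ) ^ α⌉₊ ≠ 0 := by
  have hn1 : (1 : ℝ) ≤ n := by exact_mod_cast hn
  have h1 : (1 : ℝ) ≤ (n : ℝ) ^ α := Real.one_le_rpow hn1 hα0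
  intro h0
  have := Nat.ceil_eq_zero.mp h0
  linarith

set_option maxHeartbeats 1000000 in
lemma det_bound (α : ℝ) (hα : 2 ≤ α) {n : ℕ} (h16 : 16 ≤ n)
    (hC3 : 12 * Real.sqrt ((α + 1) / 2 * n * Real.log n) ≤ Real.log 2 * n)
    {N : ℕ} (hN : N = ⌈(n : ℝ) ^ α⌉₊) (X : Fin N → Cube n) :
    (n : ℝ) / 2 - Real.sqrt ((α + 1) / 2 * n * Real.log n) ≤ W (empirical X) (unif n) := by
  classical
  have hn0 : n ≠ 0 := by omega
  have hnR : (16 : ℝ) ≤ n := by exact_mod_cast h16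
  have hnpos : (0 : ℝ) < n := by linarith
  have hlog1 : 1 ≤ Real.log n := by
    rw [Real.le_log_iff_exp_le hnpos]
    calc Real.exp 1 ≤ 2.7182818286 := Real.exp_one_lt_d9.le
      _ ≤ n := by linarith
  set t₀ : ℝ := Real.sqrt ((α + 1) / 2 * n * Real.log n) with ht₀def
  have hargnn : 0 ≤ (α + 1) / 2 * n * Real.log n := by positivity
  have ht₀sq : t₀ ^ 2 = (α + 1) / 2 * n * Real.log n := Real.sq_sqrt hargnn
  have ht₀nn : 0 ≤ t₀ := Real.sqrt_nonneg _
  have ht₀3 : 3 ≤ t₀ := by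
    rw [ht₀def, Real.le_sqrt (by norm_num) hargnn]
    have hA : (3:ℝ)/2 ≤ (α+1)/2 := by linarith
    have h1 : (3:ℝ)/2 * 16 ≤ (α+1)/2 * n := mul_le_mul hA hnR (by norm_num) (by linarith)
    have h2 : (3:ℝ)/2 * 16 * 1 ≤ ((α+1)/2 * n) * Real.log n :=
      mul_le_mul h1 hlog1 (by norm_num) (by positivity)
    norm_num at h2 ⊢
    linarith
  have hlog2 : (0.6931471803 : ℝ) < Real.log 2 := Real.log_two_gt_d9
  have hlog2' : Real.log 2 < 0.6931471808 := Real.log_two_lt_d9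
  have ht₀n : t₀ ≤ n / 2 := by nlinarith
  -- the radius
  set m : ℕ := ⌊(n : ℝ) / 2 - t₀ + 3⌋₊ with hmdef
  have hargm : 0 ≤ (n : ℝ) / 2 - t₀ + 3 := by linarith
  have hm_le : (m : ℝ) ≤ (n : ℝ) / 2 - t₀ + 3 := Nat.floor_le hargm
  have hm_gt : (n : ℝ) / 2 - t₀ + 3 < (m : ℝ) + 1 := by
    rw [hmdef]; exact Nat.lt_floor_add_one _
  set t : ℝ := (n : ℝ) / 2 - m with htdef
  have htt₀ : t₀ - 3 ≤ t := by rw [htdef]; linarith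
  have ht : 0 ≤ t := by linarith
  -- the ball bound
  set B : ℝ := 2 ^ n * Real.exp (-2 * t ^ 2 / n) with hBdef
  have hB : ∀ s : Cube n,
      ((Finset.univ.filter fun y : Cube n => hammingDist s y ≤ m).card : ℝ) ≤ B :=
    fun s => ball_card_le hn0 s m t ht (by rw [htdef]; ring)
  -- tail estimate
  have hexp : Real.exp (-2 * t ^ 2 / n) ≤ 2 * Real.exp (-(α + 1) * Real.log n) := by
    have htsq : (t₀ - 3) ^ 2 ≤ t ^ 2 := by nlinarith
    have h12 : 12 * t₀ ≤ Real.log 2 * n := hC3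
    have harg : -2 * t ^ 2 / n ≤ Real.log 2 + -(α + 1) * Real.log n := by
      rw [div_le_iff₀ hnpos]
      nlinarith
    calc Real.exp (-2 * t ^ 2 / n) ≤ Real.exp (Real.log 2 + -(α + 1) * Real.log n) :=
          Real.exp_le_exp.mpr harg
      _ = 2 * Real.exp (-(α + 1) * Real.log n) := by
          rw [Real.exp_add, Real.exp_log two_pos]
  -- N bound
  have hN0 : N ≠ 0 := hN ▸ N_ne_zero (by omega) α (by linarith)
  have hNle : (N : ℝ) ≤ 2 * (n : ℝ) ^ α := by
    have h1 : (1 : ℝ) ≤ (n : ℝ) ^ α := Real.one_le_rpow (by linarith) (by linarith)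
    have h2 : ((N : ℕ) : ℝ) < (n : ℝ) ^ α + 1 := by
      rw [hN]; exact Nat.ceil_lt_add_one (by positivity)
    linarith
  -- the support
  set S : Finset (Cube n) := Finset.univ.image X with hSdef
  have hScard : (S.card : ℝ) ≤ N := by
    have : S.card ≤ N := by
      calc S.card ≤ (Finset.univ : Finset (Fin N)).card := Finset.card_image_le
        _ = N := by simp
    exact_mod_cast this
  have hSsupp : ∀ x, empirical X x ≠ 0 → x ∈ S := by
    intro x hx
    rw [empirical] at hx
    have hcard : (Finset.univ.filter fun i => X i = x).card ≠ 0 := by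
      intro h; rw [h] at hx; simp at hx
    obtain ⟨i, hi⟩ := Finset.card_ne_zero.mp hcard
    rw [Finset.mem_filter] at hi
    exact Finset.mem_image.mpr ⟨i, Finset.mem_univ _, hi.2⟩
  -- apply the main lemma
  have hmain := W_ge_of_small_support (empirical X) (empirical_isProb hN0 X) S hSsupp m B hB
  refine le_trans ?_ hmain
  -- final arithmetic
  have h2n : (0 : ℝ) < 2 ^ n := by positivity
  set D : ℝ := (S.card : ℝ) * B / 2 ^ n with hDdef
  have hD0 : 0 ≤ D := by
    apply div_nonneg _ h2n.le
    apply mul_nonneg (Nat.cast_nonneg _)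
    rw [hBdef]; positivity
  have hD4 : D ≤ 4 / n := by
    have hrw : D = (S.card : ℝ) * Real.exp (-2 * t ^ 2 / n) := by
      rw [hDdef, hBdef]
      field_simp
    have hrpow : Real.exp (-(α + 1) * Real.log n) = (n : ℝ) ^ (-(α + 1)) := by
      rw [Real.rpow_def_of_pos hnpos, mul_comm]
    have hprod : (n : ℝ) ^ α * (n : ℝ) ^ (-(α + 1)) = ((n : ℝ))⁻¹ := by
      rw [← Real.rpow_add hnpos]
      have : α + -(α + 1) = -1 := by ring
      rw [this, Real.rpow_neg_one]
    calc D = (S.card : ℝ) * Real.exp (-2 * t ^ 2 / n) := hrw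
      _ ≤ (N : ℝ) * (2 * Real.exp (-(α + 1) * Real.log n)) := by
          apply mul_le_mul hScard hexp (Real.exp_pos _).le (Nat.cast_nonneg _)
      _ ≤ (2 * (n : ℝ) ^ α) * (2 * Real.exp (-(α + 1) * Real.log n)) := by
          apply mul_le_mul_of_nonneg_right hNle (by positivity)
      _ = 4 * ((n : ℝ) ^ α * (n : ℝ) ^ (-(α + 1))) := by rw [hrpow]; ring
      _ = 4 / n := by rw [hprod]; field_simp
  have hm4 : (m : ℝ) + 1 ≤ (n : ℝ) / 2 + 4 := by linarith
  have hprod2 : ((m : ℝ) + 1) * D ≤ ((n : ℝ) / 2 + 4) * (4 / n) :=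
    mul_le_mul hm4 hD4 hD0 (by linarith)
  have heval : ((n : ℝ) / 2 + 4) * (4 / n) = 2 + 16 / n := by
    field_simp; ring
  have h16n : (16 : ℝ) / n ≤ 1 := by
    rw [div_le_one hnpos]; linarith
  have hexpand : ((m : ℝ) + 1) * (1 - D) = ((m : ℝ) + 1) - ((m : ℝ) + 1) * D := by ring
  linarith [hexpand, hprod2, heval, h16n, hm_gt]

lemma eventually_C3 (α : ℝ) (hα : 2 ≤ α) :
    ∃ n₀ : ℕ, ∀ n, n₀ ≤ n → 16 ≤ n ∧
      12 * Real.sqrt ((α + 1) / 2 * n * Real.log n) ≤ Real.log 2 * n := by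
  have hlog2 : (0.6931471803 : ℝ) < Real.log 2 := Real.log_two_gt_d9
  set K : ℝ := 144 * (α + 1) / (Real.log 2) ^ 2 with hKdef
  have hK0 : 0 ≤ K := by positivity
  refine ⟨max 16 ⌈K ^ 2⌉₊, fun n hn => ?_⟩
  have h16 : 16 ≤ n := le_trans (le_max_left _ _) hn
  have hKn : K ^ 2 ≤ (n : ℝ) := by
    have : ⌈K ^ 2⌉₊ ≤ n := le_trans (le_max_right _ _) hn
    exact Nat.ceil_le.mp this
  have hnR : (16 : ℝ) ≤ n := by exact_mod_cast h16
  have hnpos : (0 : ℝ) < n := by linarith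
  have hsqK : K ≤ Real.sqrt n := (Real.le_sqrt hK0 hnpos.le).mpr hKn
  have hsqnn : 0 ≤ Real.sqrt (n : ℝ) := Real.sqrt_nonneg _
  have hss : Real.sqrt (n : ℝ) * Real.sqrt (n : ℝ) = n := Real.mul_self_sqrt hnpos.le
  have hsqpos : 0 < Real.sqrt (n : ℝ) := by nlinarith
  have hlogn : Real.log n ≤ 2 * Real.sqrt n := by
    have h1 : Real.log (Real.sqrt n) = Real.log n / 2 := Real.log_sqrt hnpos.le
    have h2 : Real.log (Real.sqrt n) ≤ Real.sqrt n - 1 := Real.log_le_sub_one_of_pos hsqpos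
    linarith
  refine ⟨h16, ?_⟩
  have h : Real.sqrt ((α + 1) / 2 * n * Real.log n) ≤ Real.log 2 * n / 12 := by
    rw [Real.sqrt_le_left (by positivity)]
    have e1 : (α + 1) / 2 * (n : ℝ) * Real.log n ≤ (α + 1) * ((n : ℝ) * Real.sqrt n) := by
      nlinarith [mul_le_mul_of_nonneg_left hlogn (show (0:ℝ) ≤ (α+1)/2*(n:ℝ) by positivity)]
    have e2 : (α + 1) * ((n : ℝ) * Real.sqrt n) = K * (Real.log 2) ^ 2 / 144 * (n * Real.sqrt n) := by
      rw [hKdef]; field_simp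
    have e3 : K * (Real.log 2) ^ 2 / 144 * ((n : ℝ) * Real.sqrt n)
        ≤ Real.sqrt n * (Real.log 2) ^ 2 / 144 * ((n : ℝ) * Real.sqrt n) := by
      gcongr
    have e4 : Real.sqrt (n : ℝ) * (Real.log 2) ^ 2 / 144 * ((n : ℝ) * Real.sqrt n)
        = (Real.log 2 * n / 12) ^ 2 := by
      linear_combination ((Real.log 2) ^ 2 * (n : ℝ) / 144) * hss
    linarith
  linarith

end AuxLemmas

theorem expected_wasserstein_lower_poly (α : ℝ) (hα : 2 ≤ α) :
    ∃ n₀ : ℕ, ∀ n, n₀ ≤ n →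
      ∀ (Ω : Type) [MeasurableSpace Ω] (P : Measure Ω) [IsProbabilityMeasure P]
        (N : ℕ) (X : Fin N → Ω → Cube n),
        N = ⌈(n : ℝ) ^ α⌉₊ → IIDUniform P X →
        (n : ℝ) / 2 - Real.sqrt ((α + 1) / 2 * n * Real.log n) ≤
          ∫ ω, W (empirical fun i => X i ω) (unif n) ∂P := by
  obtain ⟨n₀, hn₀⟩ := eventually_C3 α hα
  refine ⟨n₀, fun n hn Ω _ P _ N X hNdef hIID => ?_⟩
  obtain ⟨h16, hC3⟩ := hn₀ n hn
  have hN0 : N ≠ 0 := hNdef ▸ N_ne_zero (by omega) α (by linarith)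
  set g : Ω → ℝ := fun ω => W (empirical fun i => X i ω) (unif n) with hg
  have hgm : Measurable g := by
    have hY : Measurable (fun ω => (fun i => X i ω) : Ω → Fin N → Cube n) :=
      measurable_pi_lambda _ (fun i => hIID.1 i)
    exact (measurable_of_countable
      (fun v : Fin N → Cube n => W (empirical v) (unif n))).comp hY
  have hbound : ∀ ω, |g ω| ≤ (n : ℝ) := by
    intro ω
    rw [abs_le]
    constructor
    · have h1 := W_nonneg (empirical fun i => X i ω) (unif n)
      have h2 : (0 : ℝ) ≤ n := Nat.cast_nonneg n
      simp only [hg]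
      linarith
    · exact W_le (empirical_isProb hN0 _) (unif_isProb n)
  have hint : Integrable g P :=
    ⟨hgm.aestronglyMeasurable,
      MeasureTheory.HasFiniteIntegral.of_bounded (C := (n : ℝ))
        (Filter.Eventually.of_forall fun ω => by
          simpa [Real.norm_eq_abs] using hbound ω)⟩
  calc (n : ℝ) / 2 - Real.sqrt ((α + 1) / 2 * n * Real.log n)
      = ∫ _ω, ((n : ℝ) / 2 - Real.sqrt ((α + 1) / 2 * n * Real.log n)) ∂P := by
        rw [integral_const]; simp
    _ ≤ ∫ ω, g ω ∂P :=
        integral_mono (integrable_const _) hint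
          (fun ω => det_bound α hα h16 hC3 hNdef (fun i => X i ω))
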